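/- arXiv:1305.5361 — 2 statements merged into one kernel-verified Lean document; each statement's English description precedes it below -/
import Mathlib

section
/- A triangulated category equipped with a bounded t-structure is idempotent complete, i.e. every idempotent endomorphism of an object splits. -/
open CategoryTheory CategoryTheory.Limits CategoryTheory.Pretriangulated

namespace TBddAux

variable {C : Type*} [Category C] [Preadditive C] [HasZeroObject C] [HasShift C ℤ]
  [∀ (n : ℤ), (shiftFunctor C n).Additive] [Pretriangulated C]

variable (t : Triangulated.TStructure C)

lemma ring_split_aux {R : Type*} [Ring R] (e z : R) (he : e * e = e) (hz : z * z = 0)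
    (hf : (e + z) * (e + z) = e + z) :
    (1 - (z * e - e * z)) * (1 + (z * e - e * z)) = 1 ∧
    (1 + (z * e - e * z)) * (1 - (z * e - e * z)) = 1 ∧
    (e + z) * (1 + (z * e - e * z)) = (1 + (z * e - e * z)) * e := by
  have hrel : e * z + z * e = z := by
    have h1 : e * e + (e * z + z * e + z * z) = e + z := by rw [← hf]; noncomm_ring
    rw [he, hz, add_zero] at h1
    exact add_left_cancel h1
  have heze : e * (z * e) = 0 := by
    have h2 : e * (e * z + z * e) = e * z := by rw [hrel]
    rw [mul_add, ← mul_assoc, he] at h2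
    exact (add_eq_left).mp h2
  have hzez : z * (e * z) = 0 := by
    have h3 : (e * z + z * e) * z = z * z := by rw [hrel]
    rw [add_mul, mul_assoc, mul_assoc, hz, mul_zero, zero_add] at h3
    exact h3
  have hm : (z * e - e * z) * (z * e - e * z) = 0 := by
    have expand : (z * e - e * z) * (z * e - e * z)
        = z * (e * (z * e)) - z * (e * (e * z)) - e * (z * (z * e)) + e * (z * (e * z)) := by
      noncomm_ring
    rw [expand, heze, hzez, mul_zero, mul_zero]
    rw [show e * (e * z) = e * z by rw [← mul_assoc, he]]
    rw [show z * (z * e) = 0 by rw [← mul_assoc, hz, zero_mul]]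
    rw [hzez, mul_zero]
    abel
  refine ⟨?_, ?_, ?_⟩
  · have : (1 - (z * e - e * z)) * (1 + (z * e - e * z))
        = 1 - (z * e - e * z) * (z * e - e * z) := by noncomm_ring
    rw [this, hm, sub_zero]
  · have : (1 + (z * e - e * z)) * (1 - (z * e - e * z))
        = 1 - (z * e - e * z) * (z * e - e * z) := by noncomm_ring
    rw [this, hm, sub_zero]
  · have lhs : (e + z) * (1 + (z * e - e * z))
        = e + z + (e * (z * e) - e * (e * z) + z * (z * e) - z * (e * z)) := by noncomm_ring
    have rhs : (1 + (z * e - e * z)) * e = e + (z * (e * e) - e * (z * e)) := by noncomm_ring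
    rw [lhs, rhs, he, heze, hzez]
    rw [show e * (e * z) = e * z by rw [← mul_assoc, he]]
    rw [show z * (z * e) = 0 by rw [← mul_assoc, hz, zero_mul]]
    have h5 : z * e = z - e * z := eq_sub_of_add_eq (by rw [add_comm]; exact hrel)
    rw [h5]
    abel

lemma tvanish {m m' : ℤ} (hmm : m + 1 ≤ m') {X Y : C} (hX : t.le m X) (hY : t.ge m' Y)
    (f : X ⟶ Y) : f = 0 := by
  have hX' : t.le 0 (X⟦m⟧) := t.le_shift m m 0 (by omega) X hX
  have hY' : t.ge 1 (Y⟦m⟧) := t.ge_shift (m + 1) m 1 (by omega) Y (t.ge_antitone hmm Y hY)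
  have h := t.zero' ((shiftFunctor C m).map f) hX' hY'
  apply (shiftFunctor C m).map_injective
  rw [h, Functor.map_zero]

lemma ext_closed_GE (T : Triangle C) (hT : T ∈ distTriang C) (n : ℤ)
    (h1 : t.ge n T.obj₁) (h3 : t.ge n T.obj₃) : t.ge n T.obj₂ := by
  obtain ⟨Y₁, Y₂, hY₁, hY₂, α, β, γ, hTr⟩ := t.exists_triangle T.obj₂ (n - 1) n (by omega)
  -- α = 0
  have hα : α = 0 := by
    obtain ⟨g, hg⟩ := Triangle.coyoneda_exact₂ T hT α (tvanish t (by omega) hY₁ h3 _)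
    rw [hg, tvanish t (by omega) hY₁ h1 g, zero_comp]
  -- β is split mono: 𝟙 (T.obj₂) = β ≫ ρ
  obtain ⟨ρ, hρ⟩ : ∃ ρ : Y₂ ⟶ T.obj₂, 𝟙 T.obj₂ = β ≫ ρ :=
    Triangle.yoneda_exact₂ _ hTr (𝟙 T.obj₂) (by
      show α ≫ 𝟙 T.obj₂ = 0
      rw [hα, zero_comp])
  -- θ := ρ ≫ β - 𝟙 Y₂ = 0
  have hρβ : ρ ≫ β = 𝟙 Y₂ := by
    rw [← sub_eq_zero]
    obtain ⟨g, hg⟩ : ∃ g : Y₁⟦(1:ℤ)⟧ ⟶ Y₂, ρ ≫ β - 𝟙 Y₂ = γ ≫ g :=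
      Triangle.yoneda_exact₃ _ hTr (ρ ≫ β - 𝟙 Y₂) (by
        show β ≫ (ρ ≫ β - 𝟙 Y₂) = 0
        simp [Preadditive.comp_sub, ← Category.assoc, ← hρ])
    have hg0 : g = 0 := tvanish t (by omega)
      (t.le_shift (n - 1) 1 (n - 2) (by omega) Y₁ hY₁) hY₂ g
    rw [hg, hg0, comp_zero]
  exact ObjectProperty.prop_of_iso (t.ge n) (Iso.symm ⟨β, ρ, hρ.symm, hρβ⟩) hY₂

lemma ext_closed_LE (T : Triangle C) (hT : T ∈ distTriang C) (n : ℤ)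
    (h1 : t.le n T.obj₁) (h3 : t.le n T.obj₃) : t.le n T.obj₂ := by
  obtain ⟨Y₁, Y₂, hY₁, hY₂, α, β, γ, hTr⟩ := t.exists_triangle T.obj₂ n (n + 1) rfl
  -- β = 0
  have hβ : β = 0 := by
    obtain ⟨g, hg⟩ := Triangle.yoneda_exact₂ T hT β (tvanish t (by omega) h1 hY₂ _)
    rw [hg, tvanish t (by omega) h3 hY₂ g, comp_zero]
  -- α is split epi : 𝟙 T.obj₂ = ρ ≫ α
  obtain ⟨ρ, hρ⟩ : ∃ ρ : T.obj₂ ⟶ Y₁, 𝟙 T.obj₂ = ρ ≫ α :=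
    Triangle.coyoneda_exact₂ _ hTr (𝟙 T.obj₂) (by
      show 𝟙 T.obj₂ ≫ β = 0
      rw [hβ, comp_zero])
  -- θ := α ≫ ρ - 𝟙 Y₁ = 0
  have hθ : α ≫ ρ - 𝟙 Y₁ = 0 := by
    obtain ⟨g, hg⟩ := Triangle.coyoneda_exact₂ _
      (inv_rot_of_distTriang _ hTr) (α ≫ ρ - 𝟙 Y₁) (by
        show (α ≫ ρ - 𝟙 Y₁) ≫ α = 0
        simp [Preadditive.sub_comp, Category.assoc, ← hρ])
    have : g = 0 := tvanish t (by omega) hY₁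
      (t.ge_shift (n + 1) (-1) (n + 2) (by omega) Y₂ hY₂) g
    rw [hg, this]; exact zero_comp
  have hαρ : α ≫ ρ = 𝟙 Y₁ := by rw [← sub_eq_zero]; exact hθ
  exact ObjectProperty.prop_of_iso (t.le n) ⟨α, ρ, hαρ, hρ.symm⟩ hY₁

lemma heart_split (a : ℤ) (X : C) (hL : t.le a X) (hG : t.ge a X)
    (p : X ⟶ X) (hp : p ≫ p = p) :
    ∃ (Y : C) (i : Y ⟶ X) (r : X ⟶ Y), i ≫ r = 𝟙 Y ∧ r ≫ i = p := by
  obtain ⟨Cn, g, h, hTd⟩ := distinguished_cocone_triangle (𝟙 X - p)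
  set T : Triangle C := Triangle.mk (𝟙 X - p) g h with hT
  have hT1 : T.invRotate ∈ distTriang C := inv_rot_of_distTriang _ hTd
  set F : C := Cn⟦(-1:ℤ)⟧ with hF
  set iF : F ⟶ X := T.invRotate.mor₁ with hiF
  -- lift p through iF
  obtain ⟨j, hj⟩ : ∃ j : X ⟶ F, p = j ≫ iF :=
    Triangle.coyoneda_exact₂ _ hT1 p (by
      show p ≫ (𝟙 X - p) = 0
      simp [Preadditive.comp_sub, hp])
  obtain ⟨K, Q, hK, hQ, κ, π, γ, hTr⟩ := t.exists_triangle F a (a + 1) rfl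
  obtain ⟨r, hr⟩ : ∃ r : X ⟶ K, j = r ≫ κ :=
    Triangle.coyoneda_exact₂ _ hTr j (tvanish t (by omega) hL hQ _)
  set s : K ⟶ X := κ ≫ iF with hs
  have hrs : r ≫ s = p := by rw [hs, ← Category.assoc, ← hr, ← hj]
  have hsp : s ≫ p = s := by
    have h0 : s ≫ (𝟙 X - p) = 0 := by
      rw [hs, Category.assoc]
      have := comp_distTriang_mor_zero₁₂ _ hT1
      rw [show T.invRotate.mor₂ = 𝟙 X - p from rfl] at this
      rw [hiF]; erw [this, comp_zero]
    rw [Preadditive.comp_sub, Category.comp_id, sub_eq_zero] at h0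
    exact h0.symm
  have hsr : s ≫ r = 𝟙 K := by
    rw [← sub_eq_zero]
    have hθs : (s ≫ r - 𝟙 K) ≫ s = 0 := by
      simp only [Preadditive.sub_comp, Category.assoc, Category.id_comp]
      rw [hrs, hsp, sub_self]
    have hθκ : (s ≫ r - 𝟙 K) ≫ κ = 0 := by
      obtain ⟨g', hg'⟩ : ∃ g' : K ⟶ X⟦(-1:ℤ)⟧, (s ≫ r - 𝟙 K) ≫ κ =
          g' ≫ T.invRotate.invRotate.mor₁ :=
        Triangle.coyoneda_exact₂ _ (inv_rot_of_distTriang _ hT1) ((s ≫ r - 𝟙 K) ≫ κ) (by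
          show ((s ≫ r - 𝟙 K) ≫ κ) ≫ iF = 0
          rw [Category.assoc]
          exact hθs)
      rw [hg', tvanish t (by omega) hK (t.ge_shift a (-1) (a+1) (by omega) X hG) g']; exact zero_comp
    obtain ⟨g'', hg''⟩ : ∃ g'' : K ⟶ Q⟦(-1:ℤ)⟧, s ≫ r - 𝟙 K =
        g'' ≫ (Triangle.mk κ π γ).invRotate.mor₁ :=
      Triangle.coyoneda_exact₂ _ (inv_rot_of_distTriang _ hTr) (s ≫ r - 𝟙 K) (by
        show (s ≫ r - 𝟙 K) ≫ κ = 0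
        exact hθκ)
    rw [hg'', tvanish t (by omega) hK (t.ge_shift (a+1) (-1) (a+2) (by omega) Q hQ) g'']
    exact zero_comp
  exact ⟨K, s, r, hsr, hrs⟩

lemma split_of_range (k : ℕ) : ∀ (a b : ℤ), b ≤ a + k → ∀ (X : C), t.ge a X → t.le b X →
    ∀ (p : X ⟶ X), p ≫ p = p →
    ∃ (Y : C) (i : Y ⟶ X) (r : X ⟶ Y), i ≫ r = 𝟙 Y ∧ r ≫ i = p := by
  induction k with
  | zero =>
    intro a b hba X hGE hLE p hp
    exact heart_split t a X (t.le_monotone (by omega : b ≤ a) X hLE) hGE p hp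
  | succ k ih =>
    intro a b hba X hGE hLE p hp
    by_cases hk : b ≤ a + k
    · exact ih a b hk X hGE hLE p hp
    obtain ⟨A, B, hA_LE, hB_GE, u, v, δ, hTd⟩ := t.exists_triangle X a (a + 1) rfl
    set T : Triangle C := Triangle.mk u v δ with hTdef
    have hT1d : T.invRotate ∈ distTriang C := inv_rot_of_distTriang _ hTd
    have huv : u ≫ v = 0 := comp_distTriang_mor_zero₁₂ T hTd
    have hBm_GE : t.ge (a + 2) (B⟦(-1:ℤ)⟧) := t.ge_shift (a + 1) (-1) (a + 2) (by omega) B hB_GE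
    have hA_GE : t.ge a A :=
      ext_closed_GE t T.invRotate hT1d a (t.ge_antitone (by omega : a ≤ a + 2) _ hBm_GE) hGE
    have hB_LE : t.le b B :=
      ext_closed_LE t T.rotate (rot_of_distTriang _ hTd) b hLE
        (t.le_monotone (by omega : a - 1 ≤ b) _ (t.le_shift a 1 (a - 1) (by omega) A hA_LE))
    -- the induced idempotents on A and B
    obtain ⟨eB, heBv⟩ : ∃ eB : B ⟶ B, p ≫ v = v ≫ eB :=
      Triangle.yoneda_exact₂ T hTd (p ≫ v) (tvanish t (by omega) hA_LE hB_GE _)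
    obtain ⟨eA, heAu⟩ : ∃ eA : A ⟶ A, u ≫ p = eA ≫ u :=
      Triangle.coyoneda_exact₂ T hTd (u ≫ p) (by
        show (u ≫ p) ≫ v = 0
        rw [Category.assoc, heBv, ← Category.assoc, huv, zero_comp])
    have cancel_u : ∀ f : A ⟶ A, f ≫ u = 0 → f = 0 := by
      intro f hf
      obtain ⟨g, hg⟩ : ∃ g : A ⟶ B⟦(-1:ℤ)⟧, f = g ≫ T.invRotate.mor₁ :=
        Triangle.coyoneda_exact₂ _ hT1d f hf
      rw [hg, tvanish t (by omega) hA_LE hBm_GE g]; exact zero_comp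
    have cancel_v : ∀ f : B ⟶ B, v ≫ f = 0 → f = 0 := by
      intro f hf
      obtain ⟨g, hg⟩ : ∃ g : A⟦(1:ℤ)⟧ ⟶ B, f = δ ≫ g := Triangle.yoneda_exact₃ T hTd f hf
      rw [hg, tvanish t (by omega) (t.le_shift a 1 (a - 1) (by omega) A hA_LE) hB_GE g, comp_zero]
    have heA : eA ≫ eA = eA := by
      have e1 : (eA ≫ eA) ≫ u = eA ≫ u := by
        calc (eA ≫ eA) ≫ u = eA ≫ (eA ≫ u) := Category.assoc _ _ _
          _ = eA ≫ (u ≫ p) := by rw [← heAu]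
          _ = (eA ≫ u) ≫ p := (Category.assoc _ _ _).symm
          _ = (u ≫ p) ≫ p := by rw [← heAu]
          _ = u ≫ (p ≫ p) := Category.assoc _ _ _
          _ = u ≫ p := by rw [hp]
          _ = eA ≫ u := heAu
      exact sub_eq_zero.mp (cancel_u (eA ≫ eA - eA)
        (by rw [Preadditive.sub_comp, e1, sub_self]))
    have heB : eB ≫ eB = eB := by
      have e2 : v ≫ (eB ≫ eB) = v ≫ eB := by
        calc v ≫ (eB ≫ eB) = (v ≫ eB) ≫ eB := (Category.assoc _ _ _).symm
          _ = (p ≫ v) ≫ eB := by rw [← heBv]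
          _ = p ≫ (v ≫ eB) := Category.assoc _ _ _
          _ = p ≫ (p ≫ v) := by rw [← heBv]
          _ = (p ≫ p) ≫ v := (Category.assoc _ _ _).symm
          _ = p ≫ v := by rw [hp]
          _ = v ≫ eB := heBv
      exact sub_eq_zero.mp (cancel_v (eB ≫ eB - eB)
        (by rw [Preadditive.comp_sub, e2, sub_self]))
    -- the third commutative square
    obtain ⟨c, hc1, hc2⟩ : ∃ c : B ⟶ B, v ≫ c = p ≫ v ∧ δ ≫ eA⟦(1:ℤ)⟧' = c ≫ δ :=
      complete_distinguished_triangle_morphism T T hTd hTd eA p heAu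
    have hceB : c = eB := sub_eq_zero.mp (cancel_v (c - eB)
      (by rw [Preadditive.comp_sub, hc1, heBv, sub_self]))
    have hδe : δ ≫ eA⟦(1:ℤ)⟧' = eB ≫ δ := by
      rw [← hceB]; exact hc2
    -- triangle endomorphism, inverse rotated
    have hw : T.invRotate.mor₁ ≫ eA = eB⟦(-1:ℤ)⟧' ≫ T.invRotate.mor₁ := by
      have := ((invRotate C).map (Triangle.homMk T T eA p eB heAu heBv.symm hδe)).comm₁
      exact this
    have hV : T.invRotate.mor₃ ≫ (eB⟦(-1:ℤ)⟧')⟦(1:ℤ)⟧' = p ≫ T.invRotate.mor₃ := by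
      have := ((invRotate C).map (Triangle.homMk T T eA p eB heAu heBv.symm hδe)).comm₃
      exact this
    -- splittings of eA and eB given by induction hypothesis
    obtain ⟨A₀, iA, rA, hiA, hrA⟩ := ih a a (by omega) A hA_GE hA_LE eA heA
    obtain ⟨B₀, iB, rB, hiB, hrB⟩ := ih (a + 1) b (by omega) B hB_GE hB_LE eB heB
    have heArA : eA ≫ rA = rA := by rw [← hrA, Category.assoc, hiA, Category.comp_id]
    have hiAeA : iA ≫ eA = iA := by rw [← hrA, ← Category.assoc, hiA, Category.id_comp]
    set iBm : B₀⟦(-1:ℤ)⟧ ⟶ B⟦(-1:ℤ)⟧ := iB⟦(-1:ℤ)⟧' with hiBmdef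
    set rBm : B⟦(-1:ℤ)⟧ ⟶ B₀⟦(-1:ℤ)⟧ := rB⟦(-1:ℤ)⟧' with hrBmdef
    have hiBrBm : iBm ≫ rBm = 𝟙 _ := by
      rw [hiBmdef, hrBmdef, ← Functor.map_comp, hiB, CategoryTheory.Functor.map_id]
    have hrBiBm : rBm ≫ iBm = eB⟦(-1:ℤ)⟧' := by
      rw [hiBmdef, hrBmdef, ← Functor.map_comp, hrB]
    set w₀ : B₀⟦(-1:ℤ)⟧ ⟶ A₀ := iBm ≫ T.invRotate.mor₁ ≫ rA with hw₀def
    obtain ⟨X₀, u₀, h₀, hT₀d⟩ := distinguished_cocone_triangle w₀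
    set T₀ : Triangle C := Triangle.mk w₀ u₀ h₀ with hT₀def
    -- the two comparison maps r : X ⟶ X₀ and i : X₀ ⟶ X
    obtain ⟨r, hr1, hr2⟩ : ∃ r : X ⟶ X₀, u ≫ r = rA ≫ u₀ ∧
        T.invRotate.mor₃ ≫ rBm⟦(1:ℤ)⟧' = r ≫ T₀.mor₃ :=
      complete_distinguished_triangle_morphism T.invRotate T₀ hT1d hT₀d
      rBm rA (by
        show T.invRotate.mor₁ ≫ rA = rBm ≫ w₀
        rw [hw₀def]
        rw [show rBm ≫ iBm ≫ T.invRotate.mor₁ ≫ rA = (rBm ≫ iBm) ≫ T.invRotate.mor₁ ≫ rA by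
          simp only [Category.assoc]]
        rw [hrBiBm]; erw [← Category.assoc, ← hw, Category.assoc, heArA]; rfl)
    obtain ⟨i, hi1, hi2⟩ : ∃ i : X₀ ⟶ X, u₀ ≫ i = iA ≫ u ∧
        T₀.mor₃ ≫ iBm⟦(1:ℤ)⟧' = i ≫ T.invRotate.mor₃ :=
      complete_distinguished_triangle_morphism T₀ T.invRotate hT₀d hT1d
      iBm iA (by
        show w₀ ≫ iA = iBm ≫ T.invRotate.mor₁
        rw [hw₀def]
        rw [show (iBm ≫ T.invRotate.mor₁ ≫ rA) ≫ iA = iBm ≫ (T.invRotate.mor₁ ≫ (rA ≫ iA)) by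
          simp only [Category.assoc]; exact congrArg (iBm ≫ ·) (Category.assoc _ _ _)]
        erw [hrA, hw, ← Category.assoc, hiBmdef, ← Functor.map_comp]
        rw [show iB ≫ eB = iB by rw [← hrB, ← Category.assoc, hiB, Category.id_comp]]; rfl)
    -- hr1 : T.invRotate.mor₂ ≫ r = rA ≫ T₀.mor₂  (i.e. u ≫ r = rA ≫ u₀)
    -- hr2 : T.invRotate.mor₃ ≫ rBm⟦1⟧' = r ≫ T₀.mor₃
    -- hi1 : T₀.mor₂ ≫ i = iA ≫ T.invRotate.mor₂  (i.e. u₀ ≫ i = iA ≫ u)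
    -- hi2 : T₀.mor₃ ≫ iBm⟦1⟧' = i ≫ T.invRotate.mor₃
    have hur := hr1
    have hui := hi1
    have hr2' : T.invRotate.mor₃ ≫ rBm⟦(1:ℤ)⟧' = r ≫ h₀ := hr2
    have hi2' : h₀ ≫ iBm⟦(1:ℤ)⟧' = i ≫ T.invRotate.mor₃ := hi2
    -- d := r ≫ i - p kills V and is killed by u
    have hud : u ≫ (r ≫ i - p) = 0 := by
      rw [Preadditive.comp_sub, ← Category.assoc, hur, Category.assoc, hui,
        ← Category.assoc]
      rw [show rA ≫ iA = eA from hrA, ← heAu, sub_self]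
    have hdV : (r ≫ i - p) ≫ T.invRotate.mor₃ = 0 := by
      erw [Preadditive.sub_comp, Category.assoc, ← hi2, ← Category.assoc, ← hr2]
      erw [Category.assoc, ← Functor.map_comp, hrBiBm]
      erw [hV, sub_self]
    obtain ⟨ψ, hψ⟩ : ∃ ψ : X ⟶ A, r ≫ i - p = ψ ≫ u :=
      Triangle.coyoneda_exact₃ _ hT1d (r ≫ i - p) hdV
    have huψ : u ≫ ψ = 0 := cancel_u (u ≫ ψ) (by
      rw [Category.assoc, ← hψ, hud])
    -- c₀ := i ≫ r - 𝟙 X₀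
    have hu₀c₀ : u₀ ≫ (i ≫ r - 𝟙 X₀) = 0 := by
      rw [Preadditive.comp_sub, ← Category.assoc, hui, Category.assoc, hur,
        ← Category.assoc, hiA, Category.id_comp, Category.comp_id, sub_self]
    have hc₀h₀ : (i ≫ r - 𝟙 X₀) ≫ h₀ = 0 := by
      have e3 : i ≫ (r ≫ h₀) = h₀ := by
        erw [← hr2', ← Category.assoc, ← hi2', Category.assoc, ← Functor.map_comp, hiBrBm,
          CategoryTheory.Functor.map_id, Category.comp_id]
      rw [Preadditive.sub_comp, Category.assoc, Category.id_comp, e3, sub_self]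
    obtain ⟨ψ₀, hψ₀⟩ : ∃ ψ₀ : X₀ ⟶ A₀, i ≫ r - 𝟙 X₀ = ψ₀ ≫ u₀ :=
      Triangle.coyoneda_exact₃ _ hT₀d (i ≫ r - 𝟙 X₀) hc₀h₀
    have hu₀ψ₀ : u₀ ≫ ψ₀ = 0 := by
      obtain ⟨g₀, hg₀⟩ : ∃ g₀ : A₀ ⟶ B₀⟦(-1:ℤ)⟧, u₀ ≫ ψ₀ = g₀ ≫ w₀ :=
        Triangle.coyoneda_exact₂ _ hT₀d (u₀ ≫ ψ₀) (by
          show (u₀ ≫ ψ₀) ≫ u₀ = 0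
          rw [Category.assoc, ← hψ₀, hu₀c₀])
      have hg₀0 : g₀ = 0 := by
        have h5 : rA ≫ g₀ ≫ iBm = 0 :=
          tvanish t (by omega) hA_LE hBm_GE _
        calc g₀ = (iA ≫ rA) ≫ g₀ ≫ (iBm ≫ rBm) := by
              rw [hiA, hiBrBm, Category.id_comp, Category.comp_id]
          _ = iA ≫ (rA ≫ g₀ ≫ iBm) ≫ rBm := by simp only [Category.assoc]
          _ = 0 := by rw [h5, zero_comp, comp_zero]
      rw [hg₀, hg₀0, zero_comp]
    -- the corrected retraction r' with i ≫ r' = 𝟙 X₀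
    have hc₀ : i ≫ r = 𝟙 X₀ + ψ₀ ≫ u₀ := by rw [← hψ₀]; abel
    set r' : X ⟶ X₀ := r ≫ (𝟙 X₀ - ψ₀ ≫ u₀) with hr'def
    have hir' : i ≫ r' = 𝟙 X₀ := by
      calc i ≫ r' = (𝟙 X₀ + ψ₀ ≫ u₀) ≫ (𝟙 X₀ - ψ₀ ≫ u₀) := by
            rw [hr'def, ← Category.assoc, hc₀]
        _ = 𝟙 X₀ + (ψ₀ ≫ u₀ - (ψ₀ ≫ u₀ + (ψ₀ ≫ u₀) ≫ ψ₀ ≫ u₀)) := by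
            simp only [Preadditive.add_comp, Preadditive.comp_sub, Preadditive.sub_comp,
              Category.id_comp, Category.comp_id]
            abel
        _ = 𝟙 X₀ := by
            rw [show (ψ₀ ≫ u₀) ≫ ψ₀ ≫ u₀ = ψ₀ ≫ (u₀ ≫ ψ₀) ≫ u₀ by
              simp only [Category.assoc]]
            rw [hu₀ψ₀, zero_comp, comp_zero]
            abel
    have hf : (r' ≫ i) ≫ r' ≫ i = r' ≫ i := by
      rw [Category.assoc, ← Category.assoc i, hir', Category.id_comp]
    set z : X ⟶ X := r' ≫ i - p with hzdef
    have hpz : r' ≫ i = p + z := by rw [hzdef]; abel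
    have hz : z = (ψ - r ≫ ψ₀ ≫ iA) ≫ u := by
      have e5 : r ≫ (ψ₀ ≫ u₀) ≫ i = (r ≫ ψ₀ ≫ iA) ≫ u := by
        calc r ≫ (ψ₀ ≫ u₀) ≫ i = r ≫ ψ₀ ≫ (u₀ ≫ i) := by simp only [Category.assoc]
          _ = r ≫ ψ₀ ≫ iA ≫ u := by rw [hui]
          _ = (r ≫ ψ₀ ≫ iA) ≫ u := by simp only [Category.assoc]
      calc z = (r ≫ i - p) - r ≫ (ψ₀ ≫ u₀) ≫ i := by
            rw [hzdef, hr'def]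
            simp only [Preadditive.comp_sub, Preadditive.sub_comp, Category.comp_id,
              Category.assoc]
            abel
        _ = ψ ≫ u - (r ≫ ψ₀ ≫ iA) ≫ u := by rw [hψ, e5]
        _ = (ψ - r ≫ ψ₀ ≫ iA) ≫ u := by rw [Preadditive.sub_comp]
    have huΨ : u ≫ (ψ - r ≫ ψ₀ ≫ iA) = 0 := by
      have e6 : u ≫ r ≫ ψ₀ ≫ iA = 0 := by
        rw [← Category.assoc, hur]
        rw [show (rA ≫ u₀) ≫ ψ₀ ≫ iA = rA ≫ (u₀ ≫ ψ₀) ≫ iA by simp only [Category.assoc]]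
        rw [hu₀ψ₀, zero_comp, comp_zero]
      rw [Preadditive.comp_sub, huψ, e6, sub_self]
    have hzz : z ≫ z = 0 := by
      rw [hz]
      calc ((ψ - r ≫ ψ₀ ≫ iA) ≫ u) ≫ (ψ - r ≫ ψ₀ ≫ iA) ≫ u
          = (ψ - r ≫ ψ₀ ≫ iA) ≫ (u ≫ (ψ - r ≫ ψ₀ ≫ iA)) ≫ u := by
            simp only [Category.assoc]
        _ = 0 := by rw [huΨ, zero_comp, comp_zero]
    -- pass to the endomorphism ring of X
    obtain ⟨hgi, hig, hkey⟩ := ring_split_aux (R := CategoryTheory.End X) p z hp hzz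
      (by show (p + z) ≫ (p + z) = p + z; rw [← hpz]; exact hf)
    have hgi' : (𝟙 X + (p ≫ z - z ≫ p)) ≫ (𝟙 X - (p ≫ z - z ≫ p)) = 𝟙 X := hgi
    have hig' : (𝟙 X - (p ≫ z - z ≫ p)) ≫ (𝟙 X + (p ≫ z - z ≫ p)) = 𝟙 X := hig
    have hkey' : (𝟙 X + (p ≫ z - z ≫ p)) ≫ (p + z) = p ≫ (𝟙 X + (p ≫ z - z ≫ p)) := hkey
    refine ⟨X₀, i ≫ (𝟙 X - (p ≫ z - z ≫ p)), (𝟙 X + (p ≫ z - z ≫ p)) ≫ r', ?_, ?_⟩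
    · calc (i ≫ (𝟙 X - (p ≫ z - z ≫ p))) ≫ (𝟙 X + (p ≫ z - z ≫ p)) ≫ r'
          = i ≫ ((𝟙 X - (p ≫ z - z ≫ p)) ≫ (𝟙 X + (p ≫ z - z ≫ p))) ≫ r' := by
            simp only [Category.assoc]
        _ = i ≫ r' := by rw [hig', Category.id_comp]
        _ = 𝟙 X₀ := hir'
    · calc ((𝟙 X + (p ≫ z - z ≫ p)) ≫ r') ≫ i ≫ (𝟙 X - (p ≫ z - z ≫ p))
          = ((𝟙 X + (p ≫ z - z ≫ p)) ≫ (r' ≫ i)) ≫ (𝟙 X - (p ≫ z - z ≫ p)) := by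
            simp only [Category.assoc]
        _ = ((𝟙 X + (p ≫ z - z ≫ p)) ≫ (p + z)) ≫ (𝟙 X - (p ≫ z - z ≫ p)) := by
            rw [hpz]
        _ = (p ≫ (𝟙 X + (p ≫ z - z ≫ p))) ≫ (𝟙 X - (p ≫ z - z ≫ p)) := by
            rw [hkey']
        _ = p := by
            rw [Category.assoc, hgi', Category.comp_id]

end TBddAux

/-- Any triangulated category endowed with a bounded t-structure is idempotent complete. -/
theorem triangulated_with_bounded_tstructure_isIdempotentComplete
    {C : Type*} [Category C] [Preadditive C] [HasZeroObject C] [HasShift C ℤ]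
    [∀ (n : ℤ), (shiftFunctor C n).Additive] [Pretriangulated C] [IsTriangulated C]
    (t : Triangulated.TStructure C)
    (hbounded : ∀ X : C, ∃ n : ℤ, 0 ≤ n ∧ t.le n X ∧ t.ge (-n) X) :
    IsIdempotentComplete C := by
  constructor
  intro X p hp
  obtain ⟨n, hn0, hLE, hGE⟩ := hbounded X
  exact TBddAux.split_of_range t (2 * n).toNat (-n) n (by omega) X hGE hLE p hp
end

section
/- Let A be a commutative ring, S \subseteq A a multiplicative subset, and T an A-linear triangulated category with a t-structure. Then the S-localization S^{-1}T carries a unique t-structure for which the canonical functor T \to S^{-1}T is t-exact; moreover, if the t-structure on T is bounded, so is the induced t-structure on S^{-1}T. -/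
open CategoryTheory CategoryTheory.Limits CategoryTheory.Pretriangulated

section Aux

variable {C : Type*} [Category C] [Preadditive C] [HasZeroObject C] [HasShift C ℤ]
  [∀ (n : ℤ), (shiftFunctor C n).Additive] [Pretriangulated C]

/-- The general orthogonality lemma for t-structures. -/
lemma TStructure.zero_of_le_ge (t : Triangulated.TStructure C) {X Y : C} (f : X ⟶ Y) (n : ℤ)
    (hX : t.le n X) (hY : t.ge (n + 1) Y) : f = 0 := by
  have h := t.zero' ((shiftFunctor C n).map f)
    (t.le_shift n n 0 (by omega) X hX)
    (t.ge_shift (n + 1) n 1 (by omega) Y hY)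
  have h' : (shiftFunctor C n).map f = (shiftFunctor C n).map 0 := by
    simpa using h
  exact (shiftFunctor C n).map_injective h'

/-- Two t-structures with mutual containments coincide. -/
lemma TStructure.ext_of_le (t₁ t₂ : Triangulated.TStructure C)
    (hLE : ∀ n X, t₁.le n X → t₂.le n X) (hGE : ∀ n X, t₁.ge n X → t₂.ge n X) :
    t₁ = t₂ := by
  have hLE' : ∀ n X, t₂.le n X → t₁.le n X := by
    intro n Y hY
    obtain ⟨X₀, X₁, hX₀, hX₁, f, g, h, mem⟩ := t₁.exists_triangle Y n (n + 1) rfl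
    have hg : g = 0 := TStructure.zero_of_le_ge t₂ g n hY (hGE _ _ hX₁)
    obtain ⟨v, hv⟩ := Triangle.yoneda_exact₃ _ mem (𝟙 X₁) (by
      simp [hg]; exact zero_comp)
    have hv0 : v = 0 := TStructure.zero_of_le_ge t₁ v n
      (t₁.le_monotone (show n - 1 ≤ n by omega) _
        (t₁.le_shift n 1 (n - 1) (by omega) X₀ hX₀)) hX₁
    have hzero : IsZero X₁ := by
      rw [IsZero.iff_id_eq_zero, hv, hv0, comp_zero]; rfl
    have : IsIso f := Triangle.isZero₃_iff_isIso₁ _ mem |>.1 hzero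
    exact (t₁.le n).prop_of_iso (asIso f) hX₀
  have hGE' : ∀ n X, t₂.ge n X → t₁.ge n X := by
    intro n Y hY
    obtain ⟨X₀, X₁, hX₀, hX₁, f, g, h, mem⟩ := t₁.exists_triangle Y (n - 1) n (by omega)
    have hf : f = 0 := by
      refine TStructure.zero_of_le_ge t₂ f (n - 1) (hLE _ _ hX₀) ?_
      rw [show n - 1 + 1 = n by omega]
      exact hY
    obtain ⟨v, hv⟩ := Triangle.coyoneda_exact₂ _ (inv_rot_of_distTriang _ mem) (𝟙 X₀) (by
      simp [hf]; exact comp_zero)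
    have hv0 : v = 0 := by
      refine TStructure.zero_of_le_ge t₁ v (n - 1) hX₀ ?_
      rw [show n - 1 + 1 = n by omega]
      exact t₁.ge_antitone (show n ≤ n + 1 by omega) _
        (t₁.ge_shift n (-1) (n + 1) (by omega) X₁ hX₁)
    have hzero : IsZero X₀ := by
      rw [IsZero.iff_id_eq_zero, hv, hv0, zero_comp]; rfl
    have : IsIso g := Triangle.isZero₁_iff_isIso₂ _ mem |>.1 hzero
    exact (t₁.ge n).prop_of_iso (asIso g).symm hX₁
  rcases t₁ with ⟨L1, G1, _, _, _, _, _, _, _, _⟩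
  rcases t₂ with ⟨L2, G2, _, _, _, _, _, _, _, _⟩
  obtain rfl : L1 = L2 := funext fun n => funext fun X => propext ⟨hLE n X, hLE' n X⟩
  obtain rfl : G1 = G2 := funext fun n => funext fun X => propext ⟨hGE n X, hGE' n X⟩
  rfl

end Aux

/-- Let `A` be a commutative ring, `S ⊆ A` a multiplicative subset, and `T` an `A`-linear
triangulated category with a t-structure `t`.  Let `L : T ⥤ D` realize the
`S`-localization `S⁻¹T` of `T`: `D` is a pretriangulated category, `L` is an `A`-linear
triangulated functor which is bijective on objects, each map on Hom-modules
`Hom_T(X,Y) → Hom_D(LX,LY)` is the `S`-localization `Hom_T(X,Y) → Hom_T(X,Y) ⊗_A S⁻¹A`,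
and every distinguished triangle of `D` is isomorphic to the image of one of `T`.
Then `D` carries a unique t-structure for which `L` is t-exact; moreover, if `t` is
bounded, so is this induced t-structure. -/
theorem localization_tStructure_exists_unique
    {A : Type*} [CommRing A] (S : Submonoid A)
    {T : Type*} [Category T] [Preadditive T] [HasZeroObject T] [HasShift T ℤ]
    [∀ (n : ℤ), (shiftFunctor T n).Additive] [Pretriangulated T] [Linear A T]
    {D : Type*} [Category D] [Preadditive D] [HasZeroObject D] [HasShift D ℤ]
    [∀ (n : ℤ), (shiftFunctor D n).Additive] [Pretriangulated D] [Linear A D]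
    (t : Triangulated.TStructure T)
    (L : T ⥤ D) [L.CommShift ℤ] [L.IsTriangulated] [L.Additive] [L.Linear A]
    -- `D` has the same objects as `T`:
    (hobj : Function.Bijective L.obj)
    -- the Hom-modules of `D` are the `S`-localizations of those of `T`:
    (hhom : ∀ X Y : T,
      IsLocalizedModule S (L.mapLinearMap A : (X ⟶ Y) →ₗ[A] (L.obj X ⟶ L.obj Y)))
    -- the distinguished triangles of `D` are exactly those isomorphic to images of
    -- distinguished triangles of `T`:
    (htriangle : ∀ T' ∈ distTriang D,
      ∃ Tt ∈ distTriang T, Nonempty (T' ≅ L.mapTriangle.obj Tt)) :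
    (∃! t' : Triangulated.TStructure D,
      ∀ (n : ℤ) (X : T),
        (t.le n X → t'.le n (L.obj X)) ∧ (t.ge n X → t'.ge n (L.obj X))) ∧
    ((∀ X : T, ∃ n : ℤ, 0 ≤ n ∧ t.le n X ∧ t.ge (-n) X) →
      ∀ t' : Triangulated.TStructure D,
        (∀ (n : ℤ) (X : T),
          (t.le n X → t'.le n (L.obj X)) ∧ (t.ge n X → t'.ge n (L.obj X))) →
        ∀ Y : D, ∃ n : ℤ, 0 ≤ n ∧ t'.le n Y ∧ t'.ge (-n) Y) := by
  -- all Hom-spaces between images of orthogonal objects vanish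
  have hsub : ∀ (X₁ X₂ : T), (∀ (x : X₁ ⟶ X₂), x = 0) →
      ∀ (φ : L.obj X₁ ⟶ L.obj X₂), φ = 0 := by
    intro X₁ X₂ hz φ
    have := hhom X₁ X₂
    obtain ⟨⟨x, s⟩, hs⟩ := IsLocalizedModule.surj S (L.mapLinearMap A : (X₁ ⟶ X₂) →ₗ[A] _) φ
    have hx : (L.mapLinearMap A : (X₁ ⟶ X₂) →ₗ[A] _) x = 0 := by
      rw [hz x, map_zero]
    rw [hx] at hs
    have hu := (hhom X₁ X₂).map_units s
    have hinj := ((Module.End.isUnit_iff _).1 hu).injective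
    apply hinj
    rw [Module.algebraMap_end_apply, map_zero]
    simpa [Submonoid.smul_def] using hs
  -- the induced t-structure on `D`
  let t₀ : Triangulated.TStructure D :=
  { le := fun n Y => ∃ X : T, t.le n X ∧ Nonempty (L.obj X ≅ Y)
    ge := fun n Y => ∃ X : T, t.ge n X ∧ Nonempty (L.obj X ≅ Y)
    le_isClosedUnderIsomorphisms := fun n =>
      ⟨fun e hx => by obtain ⟨X, hX, ⟨e'⟩⟩ := hx; exact ⟨X, hX, ⟨e' ≪≫ e⟩⟩⟩
    ge_isClosedUnderIsomorphisms := fun n =>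
      ⟨fun e hx => by obtain ⟨X, hX, ⟨e'⟩⟩ := hx; exact ⟨X, hX, ⟨e' ≪≫ e⟩⟩⟩
    le_shift := by
      rintro n a n' h Y ⟨X, hX, ⟨e⟩⟩
      exact ⟨X⟦a⟧, t.le_shift n a n' h X hX,
        ⟨(L.commShiftIso a).app X ≪≫ (shiftFunctor D a).mapIso e⟩⟩
    ge_shift := by
      rintro n a n' h Y ⟨X, hX, ⟨e⟩⟩
      exact ⟨X⟦a⟧, t.ge_shift n a n' h X hX,
        ⟨(L.commShiftIso a).app X ≪≫ (shiftFunctor D a).mapIso e⟩⟩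
    zero' := by
      rintro Y₁ Y₂ f ⟨X₁, hX₁, ⟨e₁⟩⟩ ⟨X₂, hX₂, ⟨e₂⟩⟩
      have h0 := hsub X₁ X₂ (fun x => t.zero' x hX₁ hX₂) (e₁.hom ≫ f ≫ e₂.inv)
      calc f = e₁.inv ≫ (e₁.hom ≫ f ≫ e₂.inv) ≫ e₂.hom := by simp
        _ = 0 := by rw [h0]; simp
    le_zero_le := by
      rintro Y ⟨X, hX, e⟩
      exact ⟨X, t.le_zero_le _ hX, e⟩
    ge_one_le := by
      rintro Y ⟨X, hX, e⟩
      exact ⟨X, t.ge_one_le _ hX, e⟩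
    exists_triangle_zero_one := by
      intro Y
      obtain ⟨X, rfl⟩ := hobj.2 Y
      obtain ⟨X₀, X₁, h₀, h₁, f, g, h, mem⟩ := t.exists_triangle_zero_one X
      exact ⟨L.obj X₀, L.obj X₁, ⟨X₀, h₀, ⟨Iso.refl _⟩⟩, ⟨X₁, h₁, ⟨Iso.refl _⟩⟩,
        L.map f, L.map g, L.map h ≫ (L.commShiftIso (1 : ℤ)).hom.app X₀,
        L.map_distinguished _ mem⟩ }
  constructor
  · refine ⟨t₀, fun n X => ⟨fun h => ⟨X, h, ⟨Iso.refl _⟩⟩, fun h => ⟨X, h, ⟨Iso.refl _⟩⟩⟩, ?_⟩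
    intro t' ht'
    refine (TStructure.ext_of_le t₀ t' ?_ ?_).symm
    · rintro n Y ⟨X, hX, ⟨e⟩⟩
      exact (t'.le n).prop_of_iso e ((ht' n X).1 hX)
    · rintro n Y ⟨X, hX, ⟨e⟩⟩
      exact (t'.ge n).prop_of_iso e ((ht' n X).2 hX)
  · intro hb t' ht' Y
    obtain ⟨X, rfl⟩ := hobj.2 Y
    obtain ⟨n, hn, h1, h2⟩ := hb X
    exact ⟨n, hn, (ht' n X).1 h1, (ht' (-n) X).2 h2⟩
end
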